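/- arXiv:2003.12184 — 2 statements merged into one kernel-verified Lean document; each statement's English description precedes it below -/
import Mathlib

section
/- Each vectorized Weyl matrix is an eigenvector of a mixed Weyl superoperator: for Φ = Σ_{k,l} p_{kl} U_{kl} ⊗ conj(U_{kl}) and any m,n ∈ {0,...,N-1}, Φ · vec(U_{mn}) = λ_{mn} · vec(U_{mn}), where λ_{mn} = Σ_{k,l} p_{kl} ω^{ml − kn}. -/
open Matrix Complex
open scoped Kronecker

/-- The `N`-th root of unity `ω = exp(2πi/N)`. -/
noncomputable def omega (N : ℕ) : ℂ := Complex.exp (2 * Real.pi * Complex.I / N)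

/-- The cyclic shift matrix `X` with `X |i⟩ = |i ⊕ 1⟩`. -/
def Xmat (N : ℕ) [NeZero N] : Matrix (Fin N) (Fin N) ℂ :=
  fun i j => if i = j + 1 then 1 else 0

/-- The clock matrix `Z = diag(1, ω, ..., ω^{N-1})`. -/
noncomputable def Zmat (N : ℕ) [NeZero N] : Matrix (Fin N) (Fin N) ℂ :=
  Matrix.diagonal (fun j => omega N ^ (j : ℕ))

/-- The Weyl matrices `U_{kl} = X^k Z^l`. -/
noncomputable def WeylU (N : ℕ) [NeZero N] (k l : Fin N) : Matrix (Fin N) (Fin N) ℂ :=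
  Xmat N ^ (k : ℕ) * Zmat N ^ (l : ℕ)

/-- Vectorization `vec(A)_{(i,j)} = A_{ij}`. -/
def vecM {N : ℕ} (A : Matrix (Fin N) (Fin N) ℂ) : Fin N × Fin N → ℂ :=
  fun p => A p.1 p.2

open Fin.NatCast Fin.CommRing

lemma omega_ne_zero (N : ℕ) : omega N ≠ 0 := Complex.exp_ne_zero _

lemma omega_pow_N (N : ℕ) [NeZero N] : omega N ^ N = 1 := by
  have hN : (N : ℂ) ≠ 0 := Nat.cast_ne_zero.2 (NeZero.ne N)
  rw [omega, ← Complex.exp_nat_mul]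
  rw [show (N : ℂ) * (2 * Real.pi * Complex.I / N) = 2 * Real.pi * Complex.I by
    field_simp]
  exact Complex.exp_two_pi_mul_I

lemma conj_omega (N : ℕ) : (starRingEnd ℂ) (omega N) = (omega N)⁻¹ := by
  rw [omega, ← Complex.exp_conj, ← Complex.exp_neg]
  congr 1
  simp [map_div₀, Complex.conj_I, map_ofNat]
  ring

lemma conj_omega_pow (N : ℕ) (t : ℕ) :
    (starRingEnd ℂ) (omega N ^ t) = omega N ^ (-(t : ℤ)) := by
  rw [map_pow, conj_omega, _root_.zpow_neg, zpow_natCast, inv_pow]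

lemma omega_zpow_congr (N : ℕ) [NeZero N] {a b : ℤ} (h : (a : ZMod N) = (b : ZMod N)) :
    omega N ^ a = omega N ^ b := by
  obtain ⟨t, ht⟩ : (N : ℤ) ∣ b - a := by
    rw [← ZMod.intCast_zmod_eq_zero_iff_dvd, Int.cast_sub, sub_eq_zero, h]
  have hb : b = a + N * t := by linarith
  rw [hb, zpow_add₀ (omega_ne_zero N), _root_.zpow_mul, zpow_natCast, omega_pow_N, _root_.one_zpow, mul_one]

lemma Xpow_apply (N : ℕ) [NeZero N] (k : ℕ) (i j : Fin N) :
    (Xmat N ^ k) i j = if i = j + (k : Fin N) then 1 else 0 := by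
  induction k generalizing i j with
  | zero => simp [Matrix.one_apply]
  | succ k ih =>
    rw [pow_succ, Matrix.mul_apply]
    simp only [Xmat, mul_ite, mul_one, mul_zero]
    rw [Finset.sum_ite_eq' Finset.univ (j + 1) (fun a => (Xmat N ^ k) i a)]
    simp only [Finset.mem_univ, if_true, ih]
    congr 1
    rw [show ((k + 1 : ℕ) : Fin N) = (k : Fin N) + 1 by push_cast; ring]
    rw [eq_iff_iff]
    constructor <;> intro h <;> rw [h] <;> ring

lemma WeylU_apply (N : ℕ) [NeZero N] (k l : Fin N) (i j : Fin N) :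
    WeylU N k l i j = if i = j + k then omega N ^ ((j : ℕ) * (l : ℕ)) else 0 := by
  rw [WeylU, Zmat, Matrix.diagonal_pow, Matrix.mul_diagonal, Xpow_apply,
    Fin.cast_val_eq_self]
  simp only [Pi.pow_apply, ← pow_mul]
  split <;> simp

lemma phi_add {N : ℕ} [NeZero N] (x y : Fin N) :
    (((x + y) : Fin N).val : ZMod N) = (x.val : ZMod N) + (y.val : ZMod N) := by
  rw [Fin.val_add, ZMod.natCast_mod, Nat.cast_add]

lemma phi_sub {N : ℕ} [NeZero N] (x y : Fin N) :
    (((x - y) : Fin N).val : ZMod N) = (x.val : ZMod N) - (y.val : ZMod N) := by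
  have h := phi_add (x - y) y
  rw [sub_add_cancel] at h
  linear_combination -h

lemma weyl_conj_eigen (N : ℕ) [NeZero N] (k l m n : Fin N) :
    (WeylU N k l ⊗ₖ (WeylU N k l).map (starRingEnd ℂ)) *ᵥ vecM (WeylU N m n)
    = (omega N ^ ((m : ℤ) * (l : ℤ) - (k : ℤ) * (n : ℤ))) • vecM (WeylU N m n) := by
  funext x
  obtain ⟨i, j⟩ := x
  simp only [Matrix.mulVec, dotProduct, Fintype.sum_prod_type, Matrix.kroneckerMap_apply,
    Matrix.map_apply, vecM, Pi.smul_apply, smul_eq_mul, WeylU_apply]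
  have hc1 : ∀ a : Fin N, (i = a + k) = (a = i - k) := by
    intro a; rw [eq_iff_iff]
    constructor <;> intro h <;> rw [h] <;> ring
  have hc2 : ∀ b : Fin N, (j = b + k) = (b = j - k) := by
    intro b; rw [eq_iff_iff]
    constructor <;> intro h <;> rw [h] <;> ring
  simp only [hc1, hc2, apply_ite (starRingEnd ℂ), map_zero, ite_mul, zero_mul,
    mul_ite, mul_zero]
  rw [Finset.sum_eq_single (i - k) (fun x _ hx => Finset.sum_eq_zero fun y _ => by simp [hx])
    (fun h => absurd (Finset.mem_univ _) h)]
  rw [Finset.sum_eq_single (j - k) (fun y _ hy => by simp [hy])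
    (fun h => absurd (Finset.mem_univ _) h)]
  simp only [eq_self_iff_true, if_true]
  have hc3 : (i - k = j - k + m) = (i = j + m) := by
    rw [eq_iff_iff, sub_eq_iff_eq_add]
    constructor <;> intro h <;> rw [h] <;> ring
  simp only [hc3]
  by_cases h : i = j + m
  · rw [if_pos h, if_pos h, conj_omega_pow]
    have e1 : omega N ^ ((((i - k) : Fin N) : ℕ) * (l : ℕ)) =
        omega N ^ (((((i - k) : Fin N) : ℕ) * (l : ℕ) : ℤ)) := (zpow_natCast _ _).symm
    have e2 : omega N ^ ((((j - k) : Fin N) : ℕ) * (n : ℕ)) =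
        omega N ^ (((((j - k) : Fin N) : ℕ) * (n : ℕ) : ℤ)) := (zpow_natCast _ _).symm
    have e3 : omega N ^ ((j : ℕ) * (n : ℕ)) =
        omega N ^ (((j : ℕ) * (n : ℕ) : ℤ)) := (zpow_natCast _ _).symm
    rw [e1, e2, e3, ← zpow_add₀ (omega_ne_zero N), ← zpow_add₀ (omega_ne_zero N),
      ← zpow_add₀ (omega_ne_zero N)]
    apply omega_zpow_congr
    have hi : ((i : ℕ) : ZMod N) = ((j : ℕ) : ZMod N) + ((m : ℕ) : ZMod N) := by
      rw [h, phi_add]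
    push_cast
    rw [phi_sub, phi_sub, hi]
    ring
  · simp [h]

/-- Each vectorized Weyl matrix is an eigenvector of the mixed Weyl superoperator
`Φ = Σ_{kl} p_{kl} U_{kl} ⊗ conj(U_{kl})`, with eigenvalue
`λ_{mn} = Σ_{kl} p_{kl} ω^{ml − kn}`. -/
theorem weyl_superoperator_eigenvector (N : ℕ) [NeZero N]
    (p : Fin N → Fin N → ℂ) (m n : Fin N) :
    (∑ k, ∑ l, p k l • (WeylU N k l ⊗ₖ (WeylU N k l).map (starRingEnd ℂ)))
        *ᵥ vecM (WeylU N m n)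
    = (∑ k, ∑ l, p k l * omega N ^ ((m : ℤ) * (l : ℤ) - (k : ℤ) * (n : ℤ)))
        • vecM (WeylU N m n) := by
  have hsum : ∀ (s : Finset (Fin N)) (A : Fin N → Matrix (Fin N × Fin N) (Fin N × Fin N) ℂ)
      (v : Fin N × Fin N → ℂ), (∑ i ∈ s, A i) *ᵥ v = ∑ i ∈ s, A i *ᵥ v := by
    intro s A v
    ext x
    simp only [Matrix.mulVec, dotProduct, Matrix.sum_apply, Finset.sum_apply, Finset.sum_mul]
    rw [Finset.sum_comm]
  rw [hsum]
  rw [Finset.sum_congr rfl (fun k _ => hsum _ _ _)]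
  simp only [Matrix.smul_mulVec, weyl_conj_eigen, smul_smul, ← Finset.sum_smul]
end

section
/- For the qubit (N=2) Pauli semigroup with interaction times t_1, t_2, t_3 ≥ 0, the probabilities p_0 = (1 + e^{−2(t_2+t_3)} + e^{−2(t_1+t_3)} + e^{−2(t_1+t_2)})/4, p_1 = (1 + e^{−2(t_2+t_3)} − e^{−2(t_1+t_3)} − e^{−2(t_1+t_2)})/4, p_2 = (1 − e^{−2(t_2+t_3)} + e^{−2(t_1+t_3)} − e^{−2(t_1+t_2)})/4, p_3 = (1 − e^{−2(t_2+t_3)} − e^{−2(t_1+t_3)} + e^{−2(t_1+t_2)})/4 are all nonnegative, sum to 1, and satisfy p_0 p_i ≥ p_j p_k for every permutation {i,j,k} of {1,2,3}. -/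
open Real

/-- For the qubit Pauli semigroup with interaction times `t₁, t₂, t₃ ≥ 0`, the resulting
probabilities `p₀, p₁, p₂, p₃` are nonnegative, sum to one, and satisfy
`p₀ p_i ≥ p_j p_k` for every permutation `{i,j,k}` of `{1,2,3}`. -/
theorem pauli_semigroup_probabilities (t₁ t₂ t₃ : ℝ)
    (h₁ : 0 ≤ t₁) (h₂ : 0 ≤ t₂) (h₃ : 0 ≤ t₃) :
    let p₀ := (1 + exp (-2*(t₂+t₃)) + exp (-2*(t₁+t₃)) + exp (-2*(t₁+t₂))) / 4
    let p₁ := (1 + exp (-2*(t₂+t₃)) - exp (-2*(t₁+t₃)) - exp (-2*(t₁+t₂))) / 4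
    let p₂ := (1 - exp (-2*(t₂+t₃)) + exp (-2*(t₁+t₃)) - exp (-2*(t₁+t₂))) / 4
    let p₃ := (1 - exp (-2*(t₂+t₃)) - exp (-2*(t₁+t₃)) + exp (-2*(t₁+t₂))) / 4
    (0 ≤ p₀ ∧ 0 ≤ p₁ ∧ 0 ≤ p₂ ∧ 0 ≤ p₃) ∧
    p₀ + p₁ + p₂ + p₃ = 1 ∧
    (p₀ * p₁ ≥ p₂ * p₃ ∧ p₀ * p₂ ≥ p₁ * p₃ ∧ p₀ * p₃ ≥ p₁ * p₂) := by

  have ea : exp (-2*(t₂+t₃)) = exp (-2*t₂) * exp (-2*t₃) := by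
    rw [← exp_add]; ring_nf
  have eb : exp (-2*(t₁+t₃)) = exp (-2*t₁) * exp (-2*t₃) := by
    rw [← exp_add]; ring_nf
  have ec : exp (-2*(t₁+t₂)) = exp (-2*t₁) * exp (-2*t₂) := by
    rw [← exp_add]; ring_nf
  have ha1 : exp (-2*t₁) ≤ 1 := exp_le_one_iff.mpr (by nlinarith)
  have hb1 : exp (-2*t₂) ≤ 1 := exp_le_one_iff.mpr (by nlinarith)
  have hc1 : exp (-2*t₃) ≤ 1 := exp_le_one_iff.mpr (by nlinarith)
  have ha0 : 0 < exp (-2*t₁) := exp_pos _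
  have hb0 : 0 < exp (-2*t₂) := exp_pos _
  have hc0 : 0 < exp (-2*t₃) := exp_pos _
  set a := exp (-2*t₁)
  set b := exp (-2*t₂)
  set c := exp (-2*t₃)
  refine ⟨⟨by rw [ea, eb, ec]; nlinarith, by rw [ea, eb, ec]; nlinarith [mul_nonneg (sub_nonneg.mpr hb1) (sub_nonneg.mpr hc1), mul_nonneg (sub_nonneg.mpr ha1) (add_pos hb0 hc0).le], by rw [ea, eb, ec]; nlinarith [mul_nonneg (sub_nonneg.mpr ha1) (sub_nonneg.mpr hc1), mul_nonneg (sub_nonneg.mpr hb1) (add_pos ha0 hc0).le], by rw [ea, eb, ec]; nlinarith [mul_nonneg (sub_nonneg.mpr ha1) (sub_nonneg.mpr hb1), mul_nonneg (sub_nonneg.mpr hc1) (add_pos ha0 hb0).le]⟩, by ring, ?_, ?_, ?_⟩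
  · rw [ea, eb, ec]; nlinarith [mul_nonneg (mul_nonneg (mul_pos hb0 hc0).le (sub_nonneg.mpr ha1)) (by linarith : (0:ℝ) ≤ 1 + a)]
  · rw [ea, eb, ec]; nlinarith [mul_nonneg (mul_nonneg (mul_pos ha0 hc0).le (sub_nonneg.mpr hb1)) (by linarith : (0:ℝ) ≤ 1 + b)]
  · rw [ea, eb, ec]; nlinarith [mul_nonneg (mul_nonneg (mul_pos ha0 hb0).le (sub_nonneg.mpr hc1)) (by linarith : (0:ℝ) ≤ 1 + c)]
end
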